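/- Let p(x) = Σ_{t=0}^{T} β̂_t·L_t(x) with T fixed and let M₁ be the (N−1)×(N−1) matrix with entries (M₁)_{jk} = ∫_{−1}^1 p(x)·φ'_k(x)·φ'_j(x) dx for 0 ≤ j,k ≤ N−2. Then the number of nonzero entries of M₁ is at most (2T+1)·(N−1), i.e., O(T·N). -/

import Mathlib

open Polynomial MeasureTheory intervalIntegral Finset

/-- The `n`-th Legendre polynomial, defined by `L_0 = 1`, `L_1 = X`, and the
three-term recurrence `(n+1) L_{n+1} = (2n+1) X L_n - n L_{n-1}`. -/
noncomputable def legendre : ℕ → Polynomial ℝ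
  | 0 => 1
  | 1 => Polynomial.X
  | (n+2) =>
      Polynomial.C ((2*(n:ℝ)+3)/((n:ℝ)+2)) * (Polynomial.X * legendre (n+1))
        - Polynomial.C (((n:ℝ)+1)/((n:ℝ)+2)) * legendre n

/-- The Legendre–Galerkin Dirichlet basis function `φ_k = L_k - L_{k+2}`. -/
noncomputable def phi (k : ℕ) : Polynomial ℝ := legendre k - legendre (k+2)

lemma leg_rec (n : ℕ) : C ((n:ℝ)+2) * legendre (n+2)
    = C (2*(n:ℝ)+3) * (X * legendre (n+1)) - C ((n:ℝ)+1) * legendre n := by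
  have hc : ((n:ℝ)+2) ≠ 0 := by positivity
  rw [show legendre (n+2) = C ((2*(n:ℝ)+3)/((n:ℝ)+2)) * (X * legendre (n+1))
        - C (((n:ℝ)+1)/((n:ℝ)+2)) * legendre n from rfl]
  rw [mul_sub, ← mul_assoc, ← mul_assoc, ← C_mul, ← mul_assoc, ← C_mul,
    mul_div_cancel₀ _ hc, mul_div_cancel₀ _ hc, mul_assoc]

lemma leg_natDegree_le (n : ℕ) : (legendre n).natDegree ≤ n := by
  induction n using Nat.strong_induction_on with
  | _ n ih =>
    match n with
    | 0 => simp [legendre]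
    | 1 => simp [legendre]
    | (m+2) =>
      rw [show legendre (m+2) = C ((2*(m:ℝ)+3)/((m:ℝ)+2)) * (X * legendre (m+1))
        - C (((m:ℝ)+1)/((m:ℝ)+2)) * legendre m from rfl]
      refine le_trans (natDegree_sub_le _ _) ?_
      simp only [max_le_iff]
      constructor
      · refine le_trans (natDegree_mul_le) ?_
        have := natDegree_mul_le (p := (X:ℝ[X])) (q := legendre (m+1))
        have h1 := ih (m+1) (by omega)
        simp only [natDegree_C, natDegree_X] at *
        omega
      · have := ih m (by omega)
        refine le_trans (natDegree_mul_le) ?_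
        simp only [natDegree_C]
        omega

lemma leg_AB (n : ℕ) :
    derivative (legendre (n+1)) = X * derivative (legendre n) + C ((n:ℝ)+1) * legendre n
    ∧ X * derivative (legendre (n+1)) = C ((n:ℝ)+1) * legendre (n+1) + derivative (legendre n) := by
  induction n with
  | zero =>
    constructor
    · show derivative (legendre 1) = X * derivative (legendre 0) + _
      simp [legendre]
    · show X * derivative (legendre 1) = C (((0:ℕ):ℝ)+1) * legendre 1 + derivative (legendre 0)
      simp [legendre]
  | succ n ih =>
    obtain ⟨hA, hB⟩ := ih
    have hc : (C ((n:ℝ)+2) : ℝ[X]) ≠ 0 := by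
      simp only [ne_eq, C_eq_zero]; positivity
    have hC : (X^2 - 1) * derivative (legendre (n+1))
        = C ((n:ℝ)+1) * (X * legendre (n+1) - legendre n) := by
      simp only [map_add, map_mul, map_one, map_ofNat] at hA hB ⊢
      linear_combination (X:ℝ[X]) * hB - hA
    have hd := congrArg derivative (leg_rec n)
    simp only [derivative_mul, derivative_C, derivative_X, derivative_sub, zero_mul, zero_add,
      one_mul] at hd
    have hrec := leg_rec n
    have hA1 : derivative (legendre (n+2))
        = X * derivative (legendre (n+1)) + C ((n:ℝ)+2) * legendre (n+1) := by
      apply mul_left_cancel₀ hc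
      simp only [map_add, map_mul, map_one, map_ofNat] at hd hB ⊢
      linear_combination hd + (C (n:ℝ) + 1) * hB
    have hB1 : X * derivative (legendre (n+2))
        = C ((n:ℝ)+2) * legendre (n+2) + derivative (legendre (n+1)) := by
      apply mul_left_cancel₀ hc
      simp only [map_add, map_mul, map_one, map_ofNat] at hA1 hrec hC ⊢
      linear_combination (C (n:ℝ) + 2) * ((X:ℝ[X]) * hA1 - hrec + hC)
    push_cast
    constructor
    · convert hA1 using 3 <;> push_cast <;> ring
    · convert hB1 using 3 <;> push_cast <;> ring

lemma leg_ode (n : ℕ) : derivative ((X^2 - 1) * derivative (legendre n))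
    = C ((n:ℝ)*((n:ℝ)+1)) * legendre n := by
  match n with
  | 0 => show derivative ((X^2-1) * derivative (legendre 0)) = _ ; simp [legendre]
  | (m+1) =>
    obtain ⟨hA, hB⟩ := leg_AB m
    have hC : (X^2 - 1) * derivative (legendre (m+1))
        = C ((m:ℝ)+1) * (X * legendre (m+1) - legendre m) := by
      simp only [map_add, map_mul, map_one, map_ofNat] at hA hB ⊢
      linear_combination (X:ℝ[X]) * hB - hA
    have hd := congrArg derivative hC
    simp only [derivative_mul, derivative_sub, derivative_C, derivative_X, derivative_one,
      zero_mul, zero_add, one_mul] at hd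
    simp only [derivative_mul, derivative_sub, derivative_one, derivative_X, derivative_X_pow,
      map_add, map_mul, map_one, map_ofNat, Nat.cast_add, Nat.cast_one, Nat.cast_ofNat,
      pow_one, zero_mul, zero_add, one_mul] at hd hB ⊢
    linear_combination hd + (C (m:ℝ) + 1) * hB

lemma phi_deriv (k : ℕ) : derivative (phi k) = - C (2*(k:ℝ)+3) * legendre (k+1) := by
  obtain ⟨hA1, _⟩ := leg_AB (k+1)
  obtain ⟨_, hB⟩ := leg_AB k
  unfold phi
  rw [derivative_sub]
  simp only [map_add, map_mul, map_one, map_ofNat, Nat.cast_add, Nat.cast_one] at hA1 hB ⊢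
  linear_combination - hA1 - hB

lemma poly_intInt (p : ℝ[X]) (a b : ℝ) :
    IntervalIntegrable (fun x => p.eval x) volume a b :=
  (p.continuous_aeval).intervalIntegrable a b

lemma integral_deriv (p : ℝ[X]) :
    ∫ x in (-1:ℝ)..1, (derivative p).eval x = p.eval 1 - p.eval (-1) := by
  exact intervalIntegral.integral_eq_sub_of_hasDerivAt (f := fun x => p.eval x)
    (fun x _ => p.hasDerivAt x) (poly_intInt _ _ _)

lemma key_gen (m : ℕ) (q : ℝ[X]) :
    ((m:ℝ)*((m:ℝ)+1)) * ∫ x in (-1:ℝ)..1, (legendre m * q).eval x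
      = ∫ x in (-1:ℝ)..1, (legendre m * derivative ((X^2 - 1) * derivative q)).eval x := by
  have hid : C ((m:ℝ)*((m:ℝ)+1)) * (legendre m * q)
      = derivative ((X^2 - 1) * (derivative (legendre m) * q - legendre m * derivative q))
        + legendre m * derivative ((X^2 - 1) * derivative q) := by
    have h := leg_ode m
    simp only [derivative_mul, derivative_sub, derivative_one, derivative_X_pow,
      Nat.cast_ofNat, Nat.reduceSub, map_ofNat, pow_one, zero_mul, zero_add, one_mul,
      zero_sub, neg_mul] at h ⊢
    linear_combination -q * h
  have h2 := congrArg (fun p : ℝ[X] => ∫ x in (-1:ℝ)..1, p.eval x) hid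
  rw [show ∀ p r : ℝ[X], ∫ x in (-1:ℝ)..1, (p + r).eval x
      = (∫ x in (-1:ℝ)..1, p.eval x) + ∫ x in (-1:ℝ)..1, r.eval x from
      fun p r => by simp only [eval_add]; exact intervalIntegral.integral_add (poly_intInt _ _ _) (poly_intInt _ _ _),
    integral_deriv] at h2
  have hb : ∀ y : ℝ, y^2 - 1 = 0 → ((X^2 - 1) * (derivative (legendre m) * q - legendre m * derivative q)).eval y = 0 := by
    intro y hy; simp [eval_mul, hy]
  rw [hb 1 (by norm_num), hb (-1) (by norm_num)] at h2
  simp only [sub_zero, zero_add, sub_self, zero_sub, neg_zero] at h2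
  rw [← h2]
  rw [show ∀ c : ℝ, ∀ p : ℝ[X], ∫ x in (-1:ℝ)..1, (C c * p).eval x = c * ∫ x in (-1:ℝ)..1, p.eval x from
    fun c p => by simp only [eval_mul, eval_C]; exact intervalIntegral.integral_const_mul c _]

lemma int_comb (L P Q : ℝ[X]) (a b : ℝ) :
    (∫ x in (-1:ℝ)..1, (L * (C a * P - C b * Q)).eval x)
      = a * (∫ x in (-1:ℝ)..1, (L * P).eval x) - b * ∫ x in (-1:ℝ)..1, (L * Q).eval x := by
  rw [show L * (C a * P - C b * Q) = C a * (L * P) - C b * (L * Q) from by ring]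
  simp only [eval_sub, eval_mul, eval_C]
  rw [intervalIntegral.integral_sub (f := fun x => a * (L.eval x * P.eval x))
      (g := fun x => b * (L.eval x * Q.eval x))
      ((continuous_const.mul (L.continuous.mul P.continuous)).intervalIntegrable _ _)
      ((continuous_const.mul (L.continuous.mul Q.continuous)).intervalIntegrable _ _),
    intervalIntegral.integral_const_mul, intervalIntegral.integral_const_mul]

lemma leg_orth_pow (m i : ℕ) (h : i < m) :
    ∫ x in (-1:ℝ)..1, (legendre m * X^i).eval x = 0 := by
  induction i using Nat.strong_induction_on with
  | _ i ih =>
    have hm0 : ((m:ℝ)*((m:ℝ)+1)) ≠ 0 := by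
      have : (1:ℝ) ≤ (m:ℝ) := by exact_mod_cast Nat.one_le_cast.mpr (by omega)
      positivity
    match i, h with
    | 0, h =>
      have hk := key_gen m 1
      simp only [derivative_one, mul_zero, derivative_zero, eval_zero,
        MeasureTheory.integral_zero, intervalIntegral.integral_zero] at hk
      have := mul_eq_zero.mp hk
      simpa [pow_zero, hm0] using this.resolve_left hm0
    | 1, h =>
      have hk := key_gen m X
      have hd : derivative ((X^2 - 1) * derivative (X:ℝ[X])) = C (2:ℝ) * X := by
        simp [derivative_X_pow]
        rw [one_add_one_eq_two, map_ofNat]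
      rw [hd] at hk
      rw [show legendre m * (C (2:ℝ) * X) = C (2:ℝ) * (legendre m * X) from by ring] at hk
      simp only [eval_mul, eval_C] at hk
      rw [intervalIntegral.integral_const_mul] at hk
      have h2 : ((m:ℝ)*((m:ℝ)+1)) ≠ 2 := by
        have h2m : 2 ≤ m := by omega
        have : (2:ℝ) ≤ (m:ℝ) := by exact_mod_cast h2m
        nlinarith
      have := sub_eq_zero.mpr hk
      rw [← sub_mul] at this
      have := mul_eq_zero.mp this
      rcases this with h' | h'
      · exact absurd (sub_eq_zero.mp h') h2
      · simpa [eval_mul] using h'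
    | (i+2), h =>
      have hI := ih i (by omega) (by omega)
      have hd : derivative ((X^2 - 1) * derivative ((X:ℝ[X])^(i+2)))
          = C (((i:ℝ)+2)*((i:ℝ)+3)) * X^(i+2) - C (((i:ℝ)+2)*((i:ℝ)+1)) * X^i := by
        have h1 : derivative ((X:ℝ[X])^(i+2)) = C ((i:ℝ)+2) * X^(i+1) := by
          rw [derivative_X_pow, show i+2-1 = i+1 from rfl]
          push_cast; ring
        rw [h1]
        have h2 : derivative ((X:ℝ[X])^(i+1)) = C ((i:ℝ)+1) * X^i := by
          rw [derivative_X_pow, show i+1-1 = i from rfl]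
          push_cast; ring
        simp only [derivative_mul, derivative_sub, derivative_one, derivative_C, h2,
          derivative_X_pow, derivative_ofNat, show (2:ℕ)-1 = 1 from rfl, pow_one, Nat.cast_ofNat,
          map_add, map_mul, map_one, map_ofNat, zero_mul, zero_add, sub_zero, zero_sub]
        ring
      have hk := key_gen m (X^(i+2))
      rw [hd, int_comb, hI, mul_zero, sub_zero] at hk
      have hne : ((m:ℝ)*((m:ℝ)+1)) ≠ (((i:ℝ)+2)*((i:ℝ)+3)) := by
        have h3m : i+3 ≤ m := by omega
        have : ((i:ℝ)+3) ≤ (m:ℝ) := by exact_mod_cast h3m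
        nlinarith
      have := sub_eq_zero.mpr hk
      rw [← sub_mul] at this
      rcases mul_eq_zero.mp this with h' | h'
      · exact absurd (sub_eq_zero.mp h') hne
      · exact h'

lemma leg_orth (m : ℕ) (q : ℝ[X]) (h : q.natDegree < m) :
    ∫ x in (-1:ℝ)..1, (legendre m).eval x * q.eval x = 0 := by
  have hq : ∀ x : ℝ, q.eval x = ∑ i ∈ Finset.range (q.natDegree + 1), q.coeff i * x ^ i :=
    fun x => q.eval_eq_sum_range x
  have : (fun x => (legendre m).eval x * q.eval x)
      = fun x => ∑ i ∈ Finset.range (q.natDegree + 1),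
          q.coeff i * ((legendre m * X^i).eval x) := by
    funext x
    rw [hq x, Finset.mul_sum]
    apply Finset.sum_congr rfl
    intro i _
    simp [eval_mul]; ring
  rw [show (∫ x in (-1:ℝ)..1, (legendre m).eval x * q.eval x)
      = ∫ x in (-1:ℝ)..1, ∑ i ∈ Finset.range (q.natDegree + 1),
          q.coeff i * ((legendre m * X^i).eval x) from by rw [← this]]
  rw [intervalIntegral.integral_finset_sum]
  · apply Finset.sum_eq_zero
    intro i hi
    rw [intervalIntegral.integral_const_mul, leg_orth_pow m i (by
      simp only [Finset.mem_range] at hi; omega), mul_zero]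
  · intro i _
    exact (continuous_const.mul (legendre m * X^i).continuous).intervalIntegrable _ _

lemma term_zero (t a b : ℕ) (h : t + a + 1 < b + 1) :
    ∫ x in (-1:ℝ)..1, (legendre t * derivative (phi a) * derivative (phi b)).eval x = 0 := by
  have hP : legendre t * derivative (phi a) * derivative (phi b)
      = C ((2*(a:ℝ)+3)*(2*(b:ℝ)+3)) * (legendre (b+1) * (legendre t * legendre (a+1))) := by
    rw [phi_deriv, phi_deriv, map_mul]; ring
  rw [hP]
  have : (fun x : ℝ => (C ((2*(a:ℝ)+3)*(2*(b:ℝ)+3)) * (legendre (b+1) * (legendre t * legendre (a+1)))).eval x)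
      = fun x : ℝ => ((2*(a:ℝ)+3)*(2*(b:ℝ)+3)) * ((legendre (b+1)).eval x * (legendre t * legendre (a+1)).eval x) := by
    funext x; simp [eval_mul]
  rw [this, intervalIntegral.integral_const_mul, leg_orth, mul_zero]
  calc (legendre t * legendre (a+1)).natDegree ≤ (legendre t).natDegree + (legendre (a+1)).natDegree :=
        natDegree_mul_le
    _ ≤ t + (a+1) := add_le_add (leg_natDegree_le t) (leg_natDegree_le (a+1))
    _ < b+1 := by omega

theorem stiffness_nnz_bound (T N : ℕ) (betaHat : ℕ → ℝ)
    (M₁ : Matrix (Fin (N-1)) (Fin (N-1)) ℝ)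
    (hM : ∀ j k : Fin (N-1), M₁ j k =
      ∫ x in (-1:ℝ)..1,
        (∑ t ∈ Finset.range (T+1), betaHat t * (legendre t).eval x) *
          ((phi (k:ℕ)).derivative).eval x * ((phi (j:ℕ)).derivative).eval x) :
    {jk : Fin (N-1) × Fin (N-1) | M₁ jk.1 jk.2 ≠ 0}.ncard ≤ (2*T+1) * (N-1) := by
  have hzero : ∀ j k : Fin (N-1), ¬((j:ℕ) ≤ (k:ℕ) + T ∧ (k:ℕ) ≤ (j:ℕ) + T) → M₁ j k = 0 := by
    intro j k hjk
    rw [hM j k]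
    have hfun : (fun x : ℝ => (∑ t ∈ Finset.range (T+1), betaHat t * (legendre t).eval x) *
          ((phi (k:ℕ)).derivative).eval x * ((phi (j:ℕ)).derivative).eval x)
        = fun x : ℝ => ∑ t ∈ Finset.range (T+1),
            betaHat t * (legendre t * derivative (phi (k:ℕ)) * derivative (phi (j:ℕ))).eval x := by
      funext x
      rw [Finset.sum_mul, Finset.sum_mul]
      apply Finset.sum_congr rfl
      intro t _
      simp only [eval_mul]; ring
    rw [hfun, intervalIntegral.integral_finset_sum]
    · apply Finset.sum_eq_zero
      intro t ht
      rw [intervalIntegral.integral_const_mul]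
      simp only [Finset.mem_range] at ht
      rcases not_and_or.mp hjk with h' | h'
      · -- j > k + T
        rw [show legendre t * derivative (phi (k:ℕ)) * derivative (phi (j:ℕ))
            = legendre t * derivative (phi (k:ℕ)) * derivative (phi (j:ℕ)) from rfl,
          term_zero t k j (by omega), mul_zero]
      · -- k > j + T
        rw [show legendre t * derivative (phi (k:ℕ)) * derivative (phi (j:ℕ))
            = legendre t * derivative (phi (j:ℕ)) * derivative (phi (k:ℕ)) from by ring,
          term_zero t j k (by omega), mul_zero]
    · intro t _
      exact (continuous_const.mul (legendre t * derivative (phi (k:ℕ))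
        * derivative (phi (j:ℕ))).continuous).intervalIntegrable _ _
  -- counting
  classical
  have hsub : {jk : Fin (N-1) × Fin (N-1) | M₁ jk.1 jk.2 ≠ 0}
      ⊆ ↑(Finset.univ.filter (fun jk : Fin (N-1) × Fin (N-1) =>
          (jk.1:ℕ) ≤ (jk.2:ℕ) + T ∧ (jk.2:ℕ) ≤ (jk.1:ℕ) + T)) := by
    intro jk hjk
    simp only [Set.mem_setOf_eq] at hjk
    simp only [Finset.coe_filter, Finset.mem_univ, true_and, Set.mem_setOf_eq]
    by_contra h
    exact hjk (hzero jk.1 jk.2 h)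
  refine le_trans (Set.ncard_le_ncard hsub (Finset.finite_toSet _)) ?_
  rw [Set.ncard_coe_finset]
  calc (Finset.univ.filter (fun jk : Fin (N-1) × Fin (N-1) =>
      (jk.1:ℕ) ≤ (jk.2:ℕ) + T ∧ (jk.2:ℕ) ≤ (jk.1:ℕ) + T)).card
      ≤ (Finset.univ : Finset (Fin (N-1) × Fin (2*T+1))).card := by
        apply Finset.card_le_card_of_injOn (fun jk => (jk.1,
          ⟨min ((jk.2:ℕ) + T - (jk.1:ℕ)) (2*T), by omega⟩))
        · exact fun _ _ => Finset.mem_univ _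
        · intro a ha b hb hab
          simp only [Finset.mem_coe, Finset.mem_filter] at ha hb
          obtain ⟨-, ha1, ha2⟩ := ha
          obtain ⟨-, hb1, hb2⟩ := hb
          simp only [Prod.mk.injEq, Fin.mk.injEq] at hab
          obtain ⟨h1, h2⟩ := hab
          have h1' : (a.1:ℕ) = (b.1:ℕ) := by rw [h1]
          have h2' : (a.2:ℕ) = (b.2:ℕ) := by omega
          exact Prod.ext h1 (Fin.ext h2')
    _ = (2*T+1) * (N-1) := by simp [Finset.card_univ, mul_comm]
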